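/- Let δ, γ ∈ (−1, +∞) and let h₁, h₂ : [0,∞) → ℝ be continuous with 0 ≤ hᵢ(x) ≤ 1 for all x ≥ 0 (i = 1, 2). Then ‖T(h₁) − T(h₂)‖∞ ≤ M(δ,γ)·‖h₁ − h₂‖∞, where ‖·‖∞ denotes the supremum norm over [0,∞). In particular, if M(δ,γ) < 1, the map T is a contraction on the set of continuous functions h : [0,∞) → ℝ with 0 ≤ h ≤ 1. -/

import Mathlib

open Real Filter Set MeasureTheory intervalIntegral

/-- `F(x; h)` from the paper. -/
noncomputable def Fint (δ γ : ℝ) (h : ℝ → ℝ) (x : ℝ) : ℝ :=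
  ∫ w in (0:ℝ)..x,
    Real.exp (-(∫ z in (0:ℝ)..w, 2*z*(1+γ*h z)/(1+δ*h z))) * (1/(1+δ*h w))

/-- The constant `M(δ,γ)` from the paper. -/
noncomputable def Mconst (δ γ : ℝ) : ℝ :=
  ((max 1 (1+δ)) ^ ((3:ℝ)/2) * (max 1 (1+γ)) ^ ((1:ℝ)/2) /
    ((min 1 (1+δ)) ^ ((5:ℝ)/2) * (min 1 (1+γ)) ^ ((1:ℝ)/2))) *
  (2*|δ| + |δ-γ| * (max 1 (1+δ)) / ((min 1 (1+δ)) * (min 1 (1+γ))))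

noncomputable def Aint (δ γ : ℝ) (h : ℝ → ℝ) (w : ℝ) : ℝ :=
  ∫ z in (0:ℝ)..w, 2*z*(1+γ*h z)/(1+δ*h z)

lemma Tc.min_pos {δ : ℝ} (hδ : -1 < δ) : 0 < min 1 (1+δ) :=
  lt_min one_pos (by linarith)

lemma Tc.max_pos {δ : ℝ} (hδ : -1 < δ) : 0 < max 1 (1+δ) :=
  lt_of_lt_of_le one_pos (le_max_left _ _)

lemma Tc.denom_mem {δ t : ℝ} (h0 : 0 ≤ t) (h1 : t ≤ 1) :
    min 1 (1+δ) ≤ 1 + δ * t ∧ 1 + δ * t ≤ max 1 (1+δ) := by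
  rcases le_or_gt 0 δ with h | h
  · exact ⟨(min_le_left _ _).trans (by nlinarith),
      le_trans (by nlinarith) (le_max_right _ _)⟩
  · exact ⟨(min_le_right _ _).trans (by nlinarith),
      le_trans (by nlinarith) (le_max_left _ _)⟩

lemma Tc.ratio_bounds {δ γ u v : ℝ} (hδ : -1 < δ) (hγ : -1 < γ)
    (hu0 : 0 ≤ u) (hu1 : u ≤ 1) (hv0 : 0 ≤ v) (hv1 : v ≤ 1) :
    min 1 (1+γ) / max 1 (1+δ) ≤ (1+γ*u)/(1+δ*v) ∧
      (1+γ*u)/(1+δ*v) ≤ max 1 (1+γ) / min 1 (1+δ) := by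
  obtain ⟨hn1, hn2⟩ := Tc.denom_mem (δ := γ) hu0 hu1
  obtain ⟨hd1, hd2⟩ := Tc.denom_mem (δ := δ) hv0 hv1
  have hmδ := Tc.min_pos hδ
  have hmγ := Tc.min_pos hγ
  constructor
  · exact div_le_div₀ (by linarith) hn1 (lt_of_lt_of_le hmδ hd1) hd2
  · exact div_le_div₀ (le_trans (by linarith) (le_max_left _ _)) hn2 hmδ hd1

lemma Tc.integral_linear (c w : ℝ) : ∫ z in (0:ℝ)..w, 2*z*c = c*w^2 := by
  have e : (fun z : ℝ => 2*z*c) = (fun z : ℝ => (2*c)*z) := funext fun z => by ring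
  rw [e, intervalIntegral.integral_const_mul, integral_id]; ring

lemma Tc.acont {δ γ : ℝ} (hδ : -1 < δ) (h : ℝ → ℝ)
    (hcont : ContinuousOn h (Ici 0)) (hb : ∀ x ≥ (0:ℝ), 0 ≤ h x ∧ h x ≤ 1) :
    ContinuousOn (fun z => 2*z*(1+γ*h z)/(1+δ*h z)) (Ici 0) := by
  apply ContinuousOn.div
  · exact ((continuous_const.mul continuous_id).continuousOn).mul
      (continuousOn_const.add (continuousOn_const.mul hcont))
  · exact continuousOn_const.add (continuousOn_const.mul hcont)
  · intro x hx
    have h1 := (Tc.denom_mem (δ := δ) (hb x hx).1 (hb x hx).2).1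
    exact ne_of_gt (lt_of_lt_of_le (Tc.min_pos hδ) h1)

lemma Tc.a_intable {δ γ : ℝ} (hδ : -1 < δ) (h : ℝ → ℝ)
    (hcont : ContinuousOn h (Ici 0)) (hb : ∀ x ≥ (0:ℝ), 0 ≤ h x ∧ h x ≤ 1)
    {w : ℝ} (hw : 0 ≤ w) :
    IntervalIntegrable (fun z => 2*z*(1+γ*h z)/(1+δ*h z)) volume 0 w :=
  ((Tc.acont hδ h hcont hb).mono (by rw [Set.uIcc_of_le hw]; exact Icc_subset_Ici_self)).intervalIntegrable

lemma Tc.A_le {δ γ : ℝ} (hδ : -1 < δ) (hγ : -1 < γ) (h : ℝ → ℝ)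
    (hcont : ContinuousOn h (Ici 0)) (hb : ∀ x ≥ (0:ℝ), 0 ≤ h x ∧ h x ≤ 1)
    {w : ℝ} (hw : 0 ≤ w) :
    Aint δ γ h w ≤ (max 1 (1+γ) / min 1 (1+δ)) * w^2 := by
  rw [← Tc.integral_linear (max 1 (1+γ) / min 1 (1+δ)) w]
  apply intervalIntegral.integral_mono_on hw (Tc.a_intable hδ h hcont hb hw)
    ((continuous_const.mul continuous_id |>.mul continuous_const).intervalIntegrable 0 w)
  intro z hz
  have hz0 : (0:ℝ) ≤ z := hz.1
  have hzI : z ∈ Ici (0:ℝ) := hz0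
  rw [mul_div_assoc]
  exact mul_le_mul_of_nonneg_left
    ((Tc.ratio_bounds hδ hγ (hb z hzI).1 (hb z hzI).2 (hb z hzI).1 (hb z hzI).2).2)
    (by positivity)

lemma Tc.le_A {δ γ : ℝ} (hδ : -1 < δ) (hγ : -1 < γ) (h : ℝ → ℝ)
    (hcont : ContinuousOn h (Ici 0)) (hb : ∀ x ≥ (0:ℝ), 0 ≤ h x ∧ h x ≤ 1)
    {w : ℝ} (hw : 0 ≤ w) :
    (min 1 (1+γ) / max 1 (1+δ)) * w^2 ≤ Aint δ γ h w := by
  rw [← Tc.integral_linear (min 1 (1+γ) / max 1 (1+δ)) w]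
  apply intervalIntegral.integral_mono_on hw
    ((continuous_const.mul continuous_id |>.mul continuous_const).intervalIntegrable 0 w)
    (Tc.a_intable hδ h hcont hb hw)
  intro z hz
  have hz0 : (0:ℝ) ≤ z := hz.1
  have hzI : z ∈ Ici (0:ℝ) := hz0
  rw [mul_div_assoc]
  exact mul_le_mul_of_nonneg_left
    ((Tc.ratio_bounds hδ hγ (hb z hzI).1 (hb z hzI).2 (hb z hzI).1 (hb z hzI).2).1)
    (by show (0:ℝ) ≤ 2*z; linarith)

lemma Tc.Acont {δ γ : ℝ} (hδ : -1 < δ) (h : ℝ → ℝ)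
    (hcont : ContinuousOn h (Ici 0)) (hb : ∀ x ≥ (0:ℝ), 0 ≤ h x ∧ h x ≤ 1)
    {x : ℝ} (hx : 0 ≤ x) :
    ContinuousOn (Aint δ γ h) (Icc 0 x) := by
  have h1 : IntegrableOn (fun z => 2*z*(1+γ*h z)/(1+δ*h z)) (uIcc 0 x) volume := by
    rw [Set.uIcc_of_le hx]
    exact ((Tc.acont hδ h hcont hb).mono Icc_subset_Ici_self).integrableOn_compact isCompact_Icc
  have := intervalIntegral.continuousOn_primitive_interval h1
  rwa [Set.uIcc_of_le hx] at this

lemma Tc.gauss_trunc_le {α : ℝ} (hα : 0 < α) {x : ℝ} (hx : 0 ≤ x) :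
    ∫ w in (0:ℝ)..x, Real.exp (-(α*w^2)) ≤ Real.sqrt (π/α) / 2 := by
  rw [intervalIntegral.integral_of_le hx]
  calc ∫ w in Ioc (0:ℝ) x, Real.exp (-(α*w^2))
      ≤ ∫ w in Ioi (0:ℝ), Real.exp (-(α*w^2)) := by
        apply setIntegral_mono_set
        · simpa [neg_mul] using (integrable_exp_neg_mul_sq hα).integrableOn
        · exact Eventually.of_forall fun w => (Real.exp_pos _).le
        · exact (Ioc_subset_Ioi_self).eventuallyLE
    _ = Real.sqrt (π/α) / 2 := by
        simpa [neg_mul] using integral_gaussian_Ioi α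

lemma Tc.gauss_tendsto {β : ℝ} (hβ : 0 < β) (c : ℝ) :
    Tendsto (fun x => ∫ w in (0:ℝ)..x, Real.exp (-(β*w^2)) * c) atTop
      (nhds (Real.sqrt (π/β)/2 * c)) := by
  have hint : IntegrableOn (fun w => Real.exp (-(β*w^2)) * c) (Ioi 0) volume := by
    simpa [neg_mul] using ((integrable_exp_neg_mul_sq hβ).mul_const c).integrableOn
  have := MeasureTheory.intervalIntegral_tendsto_integral_Ioi 0 hint tendsto_id
  convert this using 2
  · rfl
  rw [MeasureTheory.integral_mul_const]
  congr 1
  simpa [neg_mul] using (integral_gaussian_Ioi β).symm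

lemma Tc.gauss_moment_trunc_le {α : ℝ} (hα : 0 < α) {x : ℝ} (hx : 0 ≤ x) :
    ∫ w in (0:ℝ)..x, w^2 * Real.exp (-(α*w^2)) ≤ 1/(2*α) * (Real.sqrt (π/α) / 2) := by
  have hcont1 : Continuous fun w : ℝ => Real.exp (-(α*w^2)) := by continuity
  have hder : ∀ w : ℝ, HasDerivAt (fun w : ℝ => -(w * Real.exp (-(α*w^2)))/(2*α))
      (w^2 * Real.exp (-(α*w^2)) - Real.exp (-(α*w^2))/(2*α)) w := by
    intro w
    have h1 : HasDerivAt (fun w : ℝ => -(α*w^2)) (-(α*(2*w))) w := by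
      exact (((hasDerivAt_pow 2 w).const_mul α).neg).congr_deriv (by simp)
    have h2 := h1.exp
    have h3 := ((hasDerivAt_id w).mul h2).neg.div_const (2*α)
    refine h3.congr_deriv ?_
    have := hα.ne'
    simp only [id]
    field_simp
    ring
  have hint1 : IntervalIntegrable (fun w : ℝ => w^2 * Real.exp (-(α*w^2))) volume 0 x :=
    ((continuous_pow 2).mul hcont1).intervalIntegrable 0 x
  have hint2 : IntervalIntegrable (fun w : ℝ => Real.exp (-(α*w^2))/(2*α)) volume 0 x :=
    (hcont1.div_const _).intervalIntegrable 0 x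
  have key := intervalIntegral.integral_eq_sub_of_hasDerivAt (f := fun w : ℝ => -(w * Real.exp (-(α*w^2)))/(2*α))
    (fun w _ => hder w) (hint1.sub hint2)
  have hsub := intervalIntegral.integral_sub hint1 hint2
  have hval : (∫ w in (0:ℝ)..x, w^2 * Real.exp (-(α*w^2))) =
      -(x * Real.exp (-(α*x^2)))/(2*α) + ∫ w in (0:ℝ)..x, Real.exp (-(α*w^2))/(2*α) := by
    have := key.symm.trans hsub
    simp only [mul_zero, zero_mul, neg_zero, zero_div, sub_zero] at this ⊢
    linarith [this]
  rw [hval]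
  have h1 : -(x * Real.exp (-(α*x^2)))/(2*α) ≤ 0 := by
    apply div_nonpos_of_nonpos_of_nonneg
    · simp [mul_nonneg hx (Real.exp_pos _).le]
    · linarith
  have h2 : (∫ w in (0:ℝ)..x, Real.exp (-(α*w^2))/(2*α)) ≤ 1/(2*α) * (Real.sqrt (π/α)/2) := by
    rw [intervalIntegral.integral_div]
    rw [div_eq_inv_mul, ← one_div]
    have := Tc.gauss_trunc_le hα hx
    apply mul_le_mul_of_nonneg_left this (by positivity)
  linarith

noncomputable def gfun (δ γ : ℝ) (h : ℝ → ℝ) (w : ℝ) : ℝ :=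
  Real.exp (-(Aint δ γ h w)) * (1/(1+δ*h w))

lemma Fint_eq (δ γ : ℝ) (h : ℝ → ℝ) (x : ℝ) :
    Fint δ γ h x = ∫ w in (0:ℝ)..x, gfun δ γ h w := rfl

lemma Tc.g_pos {δ γ : ℝ} (hδ : -1 < δ) (h : ℝ → ℝ)
    (hb : ∀ x ≥ (0:ℝ), 0 ≤ h x ∧ h x ≤ 1) {w : ℝ} (hw : 0 ≤ w) :
    0 < gfun δ γ h w := by
  have hd := (Tc.denom_mem (δ := δ) (hb w hw).1 (hb w hw).2).1
  have := Tc.min_pos hδ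
  have : 0 < 1 + δ * h w := lt_of_lt_of_le this hd
  exact mul_pos (Real.exp_pos _) (by positivity)

lemma Tc.g_ub {δ γ : ℝ} (hδ : -1 < δ) (hγ : -1 < γ) (h : ℝ → ℝ)
    (hcont : ContinuousOn h (Ici 0)) (hb : ∀ x ≥ (0:ℝ), 0 ≤ h x ∧ h x ≤ 1)
    {w : ℝ} (hw : 0 ≤ w) :
    gfun δ γ h w ≤ Real.exp (-((min 1 (1+γ) / max 1 (1+δ)) * w^2)) * (1/(min 1 (1+δ))) := by
  have hd := (Tc.denom_mem (δ := δ) (hb w hw).1 (hb w hw).2).1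
  have hmδ := Tc.min_pos hδ
  have hdpos : 0 < 1 + δ * h w := lt_of_lt_of_le hmδ hd
  apply mul_le_mul
  · exact Real.exp_le_exp.2 (neg_le_neg (Tc.le_A hδ hγ h hcont hb hw))
  · exact one_div_le_one_div_of_le hmδ hd
  · positivity
  · positivity

lemma Tc.g_lb {δ γ : ℝ} (hδ : -1 < δ) (hγ : -1 < γ) (h : ℝ → ℝ)
    (hcont : ContinuousOn h (Ici 0)) (hb : ∀ x ≥ (0:ℝ), 0 ≤ h x ∧ h x ≤ 1)
    {w : ℝ} (hw : 0 ≤ w) :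
    Real.exp (-((max 1 (1+γ) / min 1 (1+δ)) * w^2)) * (1/(max 1 (1+δ))) ≤ gfun δ γ h w := by
  have hd := (Tc.denom_mem (δ := δ) (hb w hw).1 (hb w hw).2).2
  have hd' := (Tc.denom_mem (δ := δ) (hb w hw).1 (hb w hw).2).1
  have hmδ := Tc.min_pos hδ
  have hdpos : 0 < 1 + δ * h w := lt_of_lt_of_le hmδ hd'
  apply mul_le_mul
  · exact Real.exp_le_exp.2 (neg_le_neg (Tc.A_le hδ hγ h hcont hb hw))
  · exact one_div_le_one_div_of_le hdpos hd
  · positivity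
  · exact (Real.exp_pos _).le

lemma Tc.gcont {δ γ : ℝ} (hδ : -1 < δ) (h : ℝ → ℝ)
    (hcont : ContinuousOn h (Ici 0)) (hb : ∀ x ≥ (0:ℝ), 0 ≤ h x ∧ h x ≤ 1)
    {x : ℝ} (hx : 0 ≤ x) :
    ContinuousOn (gfun δ γ h) (Icc 0 x) := by
  apply ContinuousOn.mul
  · exact Real.continuous_exp.comp_continuousOn (Tc.Acont hδ h hcont hb hx).neg
  · apply ContinuousOn.div continuousOn_const
    · exact (continuousOn_const.add (continuousOn_const.mul (hcont.mono Icc_subset_Ici_self)))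
    · intro w hw
      have hd := (Tc.denom_mem (δ := δ) (hb w hw.1).1 (hb w hw.1).2).1
      exact ne_of_gt (lt_of_lt_of_le (Tc.min_pos hδ) hd)

lemma Tc.g_intable {δ γ : ℝ} (hδ : -1 < δ) (h : ℝ → ℝ)
    (hcont : ContinuousOn h (Ici 0)) (hb : ∀ x ≥ (0:ℝ), 0 ≤ h x ∧ h x ≤ 1)
    {x y : ℝ} (hx : 0 ≤ x) (hxy : x ≤ y) :
    IntervalIntegrable (gfun δ γ h) volume x y := by
  apply ContinuousOn.intervalIntegrable
  apply (Tc.gcont hδ h hcont hb (hx.trans hxy)).mono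
  rw [Set.uIcc_of_le hxy]
  exact Icc_subset_Icc hx le_rfl

lemma Tc.F_nonneg {δ γ : ℝ} (hδ : -1 < δ) (h : ℝ → ℝ)
    (hb : ∀ x ≥ (0:ℝ), 0 ≤ h x ∧ h x ≤ 1) {x : ℝ} (hx : 0 ≤ x) :
    0 ≤ Fint δ γ h x := by
  rw [Fint_eq]
  exact intervalIntegral.integral_nonneg hx fun w hw => (Tc.g_pos hδ h hb hw.1).le

lemma Tc.F_mono {δ γ : ℝ} (hδ : -1 < δ) (h : ℝ → ℝ)
    (hcont : ContinuousOn h (Ici 0)) (hb : ∀ x ≥ (0:ℝ), 0 ≤ h x ∧ h x ≤ 1)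
    {x y : ℝ} (hx : 0 ≤ x) (hxy : x ≤ y) :
    Fint δ γ h x ≤ Fint δ γ h y := by
  rw [Fint_eq, Fint_eq]
  rw [← intervalIntegral.integral_add_adjacent_intervals
    (Tc.g_intable hδ h hcont hb le_rfl hx) (Tc.g_intable hδ h hcont hb hx hxy)]
  have : 0 ≤ ∫ w in x..y, gfun δ γ h w :=
    intervalIntegral.integral_nonneg hxy fun w hw => (Tc.g_pos hδ h hb (hx.trans hw.1)).le
  linarith

lemma Tc.F_le_limit {δ γ : ℝ} (hδ : -1 < δ) (h : ℝ → ℝ)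
    (hcont : ContinuousOn h (Ici 0)) (hb : ∀ x ≥ (0:ℝ), 0 ≤ h x ∧ h x ≤ 1)
    {L : ℝ} (hL : Tendsto (Fint δ γ h) atTop (nhds L)) {x : ℝ} (hx : 0 ≤ x) :
    Fint δ γ h x ≤ L := by
  apply ge_of_tendsto hL
  filter_upwards [eventually_ge_atTop x] with y hy
  exact Tc.F_mono hδ h hcont hb hx hy

lemma Tc.limit_lb {δ γ : ℝ} (hδ : -1 < δ) (hγ : -1 < γ) (h : ℝ → ℝ)
    (hcont : ContinuousOn h (Ici 0)) (hb : ∀ x ≥ (0:ℝ), 0 ≤ h x ∧ h x ≤ 1)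
    {L : ℝ} (hL : Tendsto (Fint δ γ h) atTop (nhds L)) :
    Real.sqrt (π/(max 1 (1+γ) / min 1 (1+δ)))/2 * (1/(max 1 (1+δ))) ≤ L := by
  have hβ : 0 < max 1 (1+γ) / min 1 (1+δ) := div_pos (Tc.max_pos hγ) (Tc.min_pos hδ)
  apply le_of_tendsto_of_tendsto (Tc.gauss_tendsto hβ (1/(max 1 (1+δ)))) hL
  filter_upwards [eventually_ge_atTop (0:ℝ)] with x hx
  rw [Fint_eq]
  apply intervalIntegral.integral_mono_on hx
  · exact (((Real.continuous_exp.comp (by continuity)).mul continuous_const)).intervalIntegrable 0 x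
  · exact Tc.g_intable hδ h hcont hb le_rfl hx
  · exact fun w hw => Tc.g_lb hδ hγ h hcont hb hw.1

lemma Tc.inv_diff {δ u v : ℝ} (hδ : -1 < δ) (hu0 : 0 ≤ u) (hu1 : u ≤ 1)
    (hv0 : 0 ≤ v) (hv1 : v ≤ 1) :
    |1/(1+δ*u) - 1/(1+δ*v)| ≤ |δ| * |u-v| / (min 1 (1+δ))^2 := by
  have hmδ := Tc.min_pos hδ
  have hd1 := (Tc.denom_mem (δ := δ) hu0 hu1).1
  have hd2 := (Tc.denom_mem (δ := δ) hv0 hv1).1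
  have h1 : (0:ℝ) < 1+δ*u := lt_of_lt_of_le hmδ hd1
  have h2 : (0:ℝ) < 1+δ*v := lt_of_lt_of_le hmδ hd2
  have e : 1/(1+δ*u) - 1/(1+δ*v) = (δ*(v-u))/((1+δ*u)*(1+δ*v)) := by
    field_simp; ring
  rw [e, abs_div, abs_mul, abs_sub_comm v u]
  rw [abs_of_pos (mul_pos h1 h2)]
  apply div_le_div_of_nonneg_left ?_ (by positivity) ?_
  · positivity
  · calc (min 1 (1+δ))^2 = (min 1 (1+δ)) * (min 1 (1+δ)) := sq (min 1 (1+δ)) ▸ by ring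
      _ ≤ (1+δ*u)*(1+δ*v) := mul_le_mul hd1 hd2 hmδ.le h1.le

lemma Tc.ratio_diff {δ γ u v : ℝ} (hδ : -1 < δ) (hu0 : 0 ≤ u) (hu1 : u ≤ 1)
    (hv0 : 0 ≤ v) (hv1 : v ≤ 1) :
    |(1+γ*u)/(1+δ*u) - (1+γ*v)/(1+δ*v)| ≤ |δ-γ| * |u-v| / (min 1 (1+δ))^2 := by
  have hmδ := Tc.min_pos hδ
  have hd1 := (Tc.denom_mem (δ := δ) hu0 hu1).1
  have hd2 := (Tc.denom_mem (δ := δ) hv0 hv1).1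
  have h1 : (0:ℝ) < 1+δ*u := lt_of_lt_of_le hmδ hd1
  have h2 : (0:ℝ) < 1+δ*v := lt_of_lt_of_le hmδ hd2
  have e : (1+γ*u)/(1+δ*u) - (1+γ*v)/(1+δ*v) = ((γ-δ)*(u-v))/((1+δ*u)*(1+δ*v)) := by
    rw [div_sub_div _ _ h1.ne' h2.ne']; congr 1; ring
  have habs : |γ-δ| = |δ-γ| := abs_sub_comm γ δ
  rw [e, abs_div, abs_mul, habs, abs_of_pos (mul_pos h1 h2)]
  apply div_le_div_of_nonneg_left ?_ (by positivity) ?_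
  · positivity
  · calc (min 1 (1+δ))^2 = (min 1 (1+δ)) * (min 1 (1+δ)) := sq (min 1 (1+δ))
      _ ≤ (1+δ*u)*(1+δ*v) := mul_le_mul hd1 hd2 hmδ.le h1.le

lemma Tc.one_sub_exp_le {t : ℝ} : 1 - Real.exp (-t) ≤ t := by
  have := Real.add_one_le_exp (-t)
  linarith

lemma Tc.exp_diff {a b c : ℝ} (hca : c ≤ a) (hcb : c ≤ b) :
    |Real.exp (-a) - Real.exp (-b)| ≤ Real.exp (-c) * |a - b| := by
  have key : ∀ a b : ℝ, a ≤ b → c ≤ a →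
      Real.exp (-a) - Real.exp (-b) ≤ Real.exp (-c) * (b - a) := by
    intro a b hab hca
    have h1 : Real.exp (-b) = Real.exp (-a) * Real.exp (-(b-a)) := by
      rw [← Real.exp_add]; ring_nf
    have h2 : 1 - (b-a) ≤ Real.exp (-(b-a)) := by
      have := Real.add_one_le_exp (-(b-a)); linarith
    have h3 : Real.exp (-a) ≤ Real.exp (-c) := Real.exp_le_exp.2 (by linarith)
    have h4 : Real.exp (-a) - Real.exp (-b) = Real.exp (-a) * (1 - Real.exp (-(b-a))) := by
      rw [h1]; ring
    rw [h4]
    calc Real.exp (-a) * (1 - Real.exp (-(b-a))) ≤ Real.exp (-a) * (b-a) := by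
          apply mul_le_mul_of_nonneg_left (by linarith) (Real.exp_pos _).le
      _ ≤ Real.exp (-c) * (b-a) := by
          apply mul_le_mul_of_nonneg_right h3 (by linarith)
  rcases le_total a b with hab | hab
  · rw [abs_of_nonneg (by simpa using Real.exp_le_exp.2 (neg_le_neg hab)),
      abs_of_nonpos (by linarith)]
    have := key a b hab hca
    linarith
  · rw [abs_of_nonpos (by simpa using Real.exp_le_exp.2 (neg_le_neg hab)),
      abs_of_nonneg (by linarith)]
    have := key b a hab hcb
    linarith

lemma Tc.A_diff {δ γ : ℝ} (hδ : -1 < δ) (hγ : -1 < γ) (h₁ h₂ : ℝ → ℝ)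
    (hcont₁ : ContinuousOn h₁ (Ici 0)) (hcont₂ : ContinuousOn h₂ (Ici 0))
    (hb₁ : ∀ x ≥ (0:ℝ), 0 ≤ h₁ x ∧ h₁ x ≤ 1) (hb₂ : ∀ x ≥ (0:ℝ), 0 ≤ h₂ x ∧ h₂ x ≤ 1)
    {ε : ℝ} (hε : ∀ z ≥ (0:ℝ), |h₁ z - h₂ z| ≤ ε) {w : ℝ} (hw : 0 ≤ w) :
    |Aint δ γ h₁ w - Aint δ γ h₂ w| ≤ |δ-γ| * ε / (min 1 (1+δ))^2 * w^2 := by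
  have hmδ := Tc.min_pos hδ
  have hi₁ := Tc.a_intable (γ := γ) hδ h₁ hcont₁ hb₁ hw
  have hi₂ := Tc.a_intable (γ := γ) hδ h₂ hcont₂ hb₂ hw
  rw [Aint, Aint, ← intervalIntegral.integral_sub hi₁ hi₂]
  calc |∫ z in (0:ℝ)..w, (2*z*(1+γ*h₁ z)/(1+δ*h₁ z) - 2*z*(1+γ*h₂ z)/(1+δ*h₂ z))|
      ≤ ∫ z in (0:ℝ)..w, |2*z*(1+γ*h₁ z)/(1+δ*h₁ z) - 2*z*(1+γ*h₂ z)/(1+δ*h₂ z)| :=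
        intervalIntegral.abs_integral_le_integral_abs hw
    _ ≤ ∫ z in (0:ℝ)..w, 2*z*(|δ-γ| * ε / (min 1 (1+δ))^2) := by
        apply intervalIntegral.integral_mono_on hw ((hi₁.sub hi₂).abs)
          ((continuous_const.mul continuous_id |>.mul continuous_const).intervalIntegrable 0 w)
        intro z hz
        have hz0 : (0:ℝ) ≤ z := hz.1
        have hzI : z ∈ Ici (0:ℝ) := hz0
        have e : 2*z*(1+γ*h₁ z)/(1+δ*h₁ z) - 2*z*(1+γ*h₂ z)/(1+δ*h₂ z)
            = (2*z) * ((1+γ*h₁ z)/(1+δ*h₁ z) - (1+γ*h₂ z)/(1+δ*h₂ z)) := by ring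
        rw [e, abs_mul, abs_of_nonneg (by positivity : (0:ℝ) ≤ 2*z)]
        apply mul_le_mul_of_nonneg_left ?_ (by positivity)
        calc |(1+γ*h₁ z)/(1+δ*h₁ z) - (1+γ*h₂ z)/(1+δ*h₂ z)|
            ≤ |δ-γ| * |h₁ z - h₂ z| / (min 1 (1+δ))^2 :=
              Tc.ratio_diff hδ (hb₁ z hzI).1 (hb₁ z hzI).2 (hb₂ z hzI).1 (hb₂ z hzI).2
          _ ≤ |δ-γ| * ε / (min 1 (1+δ))^2 := by gcongr; exact hε z hzI
    _ = |δ-γ| * ε / (min 1 (1+δ))^2 * w^2 := Tc.integral_linear _ _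

lemma Tc.g_diff {δ γ : ℝ} (hδ : -1 < δ) (hγ : -1 < γ) (h₁ h₂ : ℝ → ℝ)
    (hcont₁ : ContinuousOn h₁ (Ici 0)) (hcont₂ : ContinuousOn h₂ (Ici 0))
    (hb₁ : ∀ x ≥ (0:ℝ), 0 ≤ h₁ x ∧ h₁ x ≤ 1) (hb₂ : ∀ x ≥ (0:ℝ), 0 ≤ h₂ x ∧ h₂ x ≤ 1)
    {ε : ℝ} (hε : ∀ z ≥ (0:ℝ), |h₁ z - h₂ z| ≤ ε) {w : ℝ} (hw : 0 ≤ w) :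
    |gfun δ γ h₁ w - gfun δ γ h₂ w| ≤
      |δ| * ε / (min 1 (1+δ))^2 * Real.exp (-((min 1 (1+γ)/max 1 (1+δ)) * w^2))
      + |δ-γ| * ε / (min 1 (1+δ))^3 *
          (w^2 * Real.exp (-((min 1 (1+γ)/max 1 (1+δ)) * w^2))) := by
  have hmδ := Tc.min_pos hδ
  set α := min 1 (1+γ)/max 1 (1+δ) with hα
  have hεw := hε w hw
  have hε0 : 0 ≤ ε := le_trans (abs_nonneg _) hεw
  have hd2m := (Tc.denom_mem (δ := δ) (hb₂ w hw).1 (hb₂ w hw).2).1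
  have hd2 : 0 < 1+δ*h₂ w := lt_of_lt_of_le hmδ hd2m
  have hA1 : α * w^2 ≤ Aint δ γ h₁ w := Tc.le_A hδ hγ h₁ hcont₁ hb₁ hw
  have hA2 : α * w^2 ≤ Aint δ γ h₂ w := Tc.le_A hδ hγ h₂ hcont₂ hb₂ hw
  have hE1 : Real.exp (-(Aint δ γ h₁ w)) ≤ Real.exp (-(α*w^2)) :=
    Real.exp_le_exp.2 (by linarith)
  have split : gfun δ γ h₁ w - gfun δ γ h₂ w =
      Real.exp (-(Aint δ γ h₁ w)) * (1/(1+δ*h₁ w) - 1/(1+δ*h₂ w))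
      + (Real.exp (-(Aint δ γ h₁ w)) - Real.exp (-(Aint δ γ h₂ w))) * (1/(1+δ*h₂ w)) := by
    simp only [gfun]; ring
  rw [split]
  have b1 : |Real.exp (-(Aint δ γ h₁ w)) * (1/(1+δ*h₁ w) - 1/(1+δ*h₂ w))|
      ≤ Real.exp (-(α*w^2)) * (|δ| * ε / (min 1 (1+δ))^2) := by
    rw [abs_mul, abs_of_pos (Real.exp_pos _)]
    apply mul_le_mul hE1 ?_ (abs_nonneg _) (Real.exp_pos _).le
    calc |1/(1+δ*h₁ w) - 1/(1+δ*h₂ w)| ≤ |δ| * |h₁ w - h₂ w| / (min 1 (1+δ))^2 :=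
        Tc.inv_diff hδ (hb₁ w hw).1 (hb₁ w hw).2 (hb₂ w hw).1 (hb₂ w hw).2
      _ ≤ |δ| * ε / (min 1 (1+δ))^2 := by gcongr
  have b2 : |(Real.exp (-(Aint δ γ h₁ w)) - Real.exp (-(Aint δ γ h₂ w))) * (1/(1+δ*h₂ w))|
      ≤ (Real.exp (-(α*w^2)) * (|δ-γ| * ε / (min 1 (1+δ))^2 * w^2)) * (1/(min 1 (1+δ))) := by
    rw [abs_mul]
    apply mul_le_mul ?_ ?_ (abs_nonneg _) (by positivity)
    · calc |Real.exp (-(Aint δ γ h₁ w)) - Real.exp (-(Aint δ γ h₂ w))|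
          ≤ Real.exp (-(α*w^2)) * |Aint δ γ h₁ w - Aint δ γ h₂ w| := Tc.exp_diff hA1 hA2
        _ ≤ Real.exp (-(α*w^2)) * (|δ-γ| * ε / (min 1 (1+δ))^2 * w^2) := by
            gcongr
            exact Tc.A_diff hδ hγ h₁ h₂ hcont₁ hcont₂ hb₁ hb₂ hε hw
    · rw [abs_of_pos (by positivity)]
      exact one_div_le_one_div_of_le hmδ hd2m
  calc |Real.exp (-(Aint δ γ h₁ w)) * (1/(1+δ*h₁ w) - 1/(1+δ*h₂ w))
        + (Real.exp (-(Aint δ γ h₁ w)) - Real.exp (-(Aint δ γ h₂ w))) * (1/(1+δ*h₂ w))|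
      ≤ _ := abs_add_le _ _
    _ ≤ Real.exp (-(α*w^2)) * (|δ| * ε / (min 1 (1+δ))^2)
        + (Real.exp (-(α*w^2)) * (|δ-γ| * ε / (min 1 (1+δ))^2 * w^2)) * (1/(min 1 (1+δ))) :=
        add_le_add b1 b2
    _ = |δ| * ε / (min 1 (1+δ))^2 * Real.exp (-(α * w^2))
        + |δ-γ| * ε / (min 1 (1+δ))^3 * (w^2 * Real.exp (-(α * w^2))) := by ring

noncomputable def Kconst (δ γ : ℝ) : ℝ :=
  |δ| / (min 1 (1+δ))^2 * (Real.sqrt (π/(min 1 (1+γ)/max 1 (1+δ)))/2)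
  + |δ-γ| / (min 1 (1+δ))^3 *
      (1/(2*(min 1 (1+γ)/max 1 (1+δ))) * (Real.sqrt (π/(min 1 (1+γ)/max 1 (1+δ)))/2))

lemma Tc.F_diff {δ γ : ℝ} (hδ : -1 < δ) (hγ : -1 < γ) (h₁ h₂ : ℝ → ℝ)
    (hcont₁ : ContinuousOn h₁ (Ici 0)) (hcont₂ : ContinuousOn h₂ (Ici 0))
    (hb₁ : ∀ x ≥ (0:ℝ), 0 ≤ h₁ x ∧ h₁ x ≤ 1) (hb₂ : ∀ x ≥ (0:ℝ), 0 ≤ h₂ x ∧ h₂ x ≤ 1)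
    {ε : ℝ} (hε : ∀ z ≥ (0:ℝ), |h₁ z - h₂ z| ≤ ε) {x : ℝ} (hx : 0 ≤ x) :
    |Fint δ γ h₁ x - Fint δ γ h₂ x| ≤ ε * Kconst δ γ := by
  have hmδ := Tc.min_pos hδ
  have hε0 : 0 ≤ ε := le_trans (abs_nonneg _) (hε 0 le_rfl)
  have hα : 0 < min 1 (1+γ)/max 1 (1+δ) := div_pos (Tc.min_pos hγ) (Tc.max_pos hδ)
  set α := min 1 (1+γ)/max 1 (1+δ) with hαdef
  have hexp : Continuous fun w : ℝ => Real.exp (-(α*w^2)) := by continuity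
  have hgi₁ := Tc.g_intable (γ := γ) hδ h₁ hcont₁ hb₁ le_rfl hx
  have hgi₂ := Tc.g_intable (γ := γ) hδ h₂ hcont₂ hb₂ le_rfl hx
  have hc1 : IntervalIntegrable
      (fun w : ℝ => |δ| * ε / (min 1 (1+δ))^2 * Real.exp (-(α*w^2))) volume 0 x :=
    (continuous_const.mul hexp).intervalIntegrable 0 x
  have hc2 : IntervalIntegrable
      (fun w : ℝ => |δ-γ| * ε / (min 1 (1+δ))^3 * (w^2 * Real.exp (-(α*w^2)))) volume 0 x :=
    (continuous_const.mul ((continuous_pow 2).mul hexp)).intervalIntegrable 0 x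
  rw [Fint_eq, Fint_eq, ← intervalIntegral.integral_sub hgi₁ hgi₂]
  calc |∫ w in (0:ℝ)..x, (gfun δ γ h₁ w - gfun δ γ h₂ w)|
      ≤ ∫ w in (0:ℝ)..x, |gfun δ γ h₁ w - gfun δ γ h₂ w| :=
        intervalIntegral.abs_integral_le_integral_abs hx
    _ ≤ ∫ w in (0:ℝ)..x,
          (|δ| * ε / (min 1 (1+δ))^2 * Real.exp (-(α*w^2))
            + |δ-γ| * ε / (min 1 (1+δ))^3 * (w^2 * Real.exp (-(α*w^2)))) := by
        apply intervalIntegral.integral_mono_on hx ((hgi₁.sub hgi₂).abs) (hc1.add hc2)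
        exact fun w hw => Tc.g_diff hδ hγ h₁ h₂ hcont₁ hcont₂ hb₁ hb₂ hε hw.1
    _ = |δ| * ε / (min 1 (1+δ))^2 * (∫ w in (0:ℝ)..x, Real.exp (-(α*w^2)))
        + |δ-γ| * ε / (min 1 (1+δ))^3 * (∫ w in (0:ℝ)..x, (w^2 * Real.exp (-(α*w^2)))) := by
        rw [intervalIntegral.integral_add hc1 hc2,
          intervalIntegral.integral_const_mul, intervalIntegral.integral_const_mul]
    _ ≤ |δ| * ε / (min 1 (1+δ))^2 * (Real.sqrt (π/α)/2)
        + |δ-γ| * ε / (min 1 (1+δ))^3 * (1/(2*α) * (Real.sqrt (π/α)/2)) := by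
        apply add_le_add
        · exact mul_le_mul_of_nonneg_left (Tc.gauss_trunc_le hα hx) (by positivity)
        · exact mul_le_mul_of_nonneg_left (Tc.gauss_moment_trunc_le hα hx) (by positivity)
    _ = ε * Kconst δ γ := by rw [Kconst]; ring

lemma Tc.limit_diff {δ γ : ℝ} (hδ : -1 < δ) (hγ : -1 < γ) (h₁ h₂ : ℝ → ℝ)
    (hcont₁ : ContinuousOn h₁ (Ici 0)) (hcont₂ : ContinuousOn h₂ (Ici 0))
    (hb₁ : ∀ x ≥ (0:ℝ), 0 ≤ h₁ x ∧ h₁ x ≤ 1) (hb₂ : ∀ x ≥ (0:ℝ), 0 ≤ h₂ x ∧ h₂ x ≤ 1)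
    {ε : ℝ} (hε : ∀ z ≥ (0:ℝ), |h₁ z - h₂ z| ≤ ε)
    {L₁ L₂ : ℝ} (hL₁ : Tendsto (Fint δ γ h₁) atTop (nhds L₁))
    (hL₂ : Tendsto (Fint δ γ h₂) atTop (nhds L₂)) :
    |L₁ - L₂| ≤ ε * Kconst δ γ := by
  apply le_of_tendsto ((hL₁.sub hL₂).abs)
  filter_upwards [eventually_ge_atTop (0:ℝ)] with x hx
  exact Tc.F_diff hδ hγ h₁ h₂ hcont₁ hcont₂ hb₁ hb₂ hε hx

lemma Tc.sq_rpow_half (s : ℝ) (hs : 0 ≤ s) (k : ℕ) : (s^2) ^ ((k:ℝ)/2) = s^k := by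
  have h2 : ((2:ℕ):ℝ) * ((k:ℝ)/2) = (k:ℝ) := by push_cast; ring
  rw [← Real.rpow_natCast s 2, ← Real.rpow_mul hs, h2, Real.rpow_natCast]

lemma Tc.algebra {m Mm n N d g : ℝ} (hm : 0 < m) (hM : 0 < Mm) (hn : 0 < n) (hN : 0 < N) :
    2 * (d / m^2 * (Real.sqrt (π/(n/Mm))/2)
      + g / m^3 * (1/(2*(n/Mm)) * (Real.sqrt (π/(n/Mm))/2)))
    = (Mm ^ ((3:ℝ)/2) * N ^ ((1:ℝ)/2) / (m ^ ((5:ℝ)/2) * n ^ ((1:ℝ)/2)))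
      * (2*d + g * Mm / (m * n)) * (Real.sqrt (π/(N/m))/2 * (1/Mm)) := by
  obtain ⟨sm, hsm0, hsm⟩ : ∃ s, 0 ≤ s ∧ s^2 = m :=
    ⟨Real.sqrt m, Real.sqrt_nonneg m, Real.sq_sqrt hm.le⟩
  obtain ⟨sM, hsM0, hsM⟩ : ∃ s, 0 ≤ s ∧ s^2 = Mm :=
    ⟨Real.sqrt Mm, Real.sqrt_nonneg Mm, Real.sq_sqrt hM.le⟩
  obtain ⟨sn, hsn0, hsn⟩ : ∃ s, 0 ≤ s ∧ s^2 = n :=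
    ⟨Real.sqrt n, Real.sqrt_nonneg n, Real.sq_sqrt hn.le⟩
  obtain ⟨sN, hsN0, hsN⟩ : ∃ s, 0 ≤ s ∧ s^2 = N :=
    ⟨Real.sqrt N, Real.sqrt_nonneg N, Real.sq_sqrt hN.le⟩
  obtain ⟨sπ, hsπ0, hsπ⟩ : ∃ s, 0 ≤ s ∧ s^2 = π :=
    ⟨Real.sqrt π, Real.sqrt_nonneg π, Real.sq_sqrt Real.pi_pos.le⟩
  have hsm' : 0 < sm := by nlinarith
  have hsM' : 0 < sM := by nlinarith
  have hsn' : 0 < sn := by nlinarith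
  have hsN' : 0 < sN := by nlinarith
  subst hsm hsM hsn hsN
  rw [← hsπ]
  have e1 : Real.sqrt (sπ^2/(sn^2/sM^2)) = sπ*sM/sn := by
    rw [show sπ^2/(sn^2/sM^2) = (sπ*sM/sn)^2 by field_simp,
      Real.sqrt_sq (by positivity)]
  have e2 : Real.sqrt (sπ^2/(sN^2/sm^2)) = sπ*sm/sN := by
    rw [show sπ^2/(sN^2/sm^2) = (sπ*sm/sN)^2 by field_simp,
      Real.sqrt_sq (by positivity)]
  have e3 : (sM^2) ^ ((3:ℝ)/2) = sM^3 := by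
    have := Tc.sq_rpow_half sM hsM0 3; norm_num at this; exact this
  have e4 : (sN^2) ^ ((1:ℝ)/2) = sN^1 := by
    have := Tc.sq_rpow_half sN hsN0 1; norm_num at this; simpa using this
  have e5 : (sm^2) ^ ((5:ℝ)/2) = sm^5 := by
    have := Tc.sq_rpow_half sm hsm0 5; norm_num at this; exact this
  have e6 : (sn^2) ^ ((1:ℝ)/2) = sn^1 := by
    have := Tc.sq_rpow_half sn hsn0 1; norm_num at this; simpa using this
  rw [e1, e2, e3, e4, e5, e6]
  field_simp

theorem T_contraction_estimate (δ γ : ℝ) (hδ : -1 < δ) (hγ : -1 < γ)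
    (h₁ h₂ : ℝ → ℝ)
    (hcont₁ : ContinuousOn h₁ (Set.Ici 0)) (hcont₂ : ContinuousOn h₂ (Set.Ici 0))
    (hb₁ : ∀ x ≥ (0:ℝ), 0 ≤ h₁ x ∧ h₁ x ≤ 1)
    (hb₂ : ∀ x ≥ (0:ℝ), 0 ≤ h₂ x ∧ h₂ x ≤ 1)
    (L₁ L₂ : ℝ) (hL₁ : Tendsto (Fint δ γ h₁) atTop (nhds L₁))
    (hL₂ : Tendsto (Fint δ γ h₂) atTop (nhds L₂)) :
    (⨆ t : Set.Ici (0:ℝ), |Fint δ γ h₁ t / L₁ - Fint δ γ h₂ t / L₂|) ≤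
      Mconst δ γ * ⨆ t : Set.Ici (0:ℝ), |h₁ t - h₂ t| := by
  have hmδ := Tc.min_pos hδ
  have hMδ := Tc.max_pos hδ
  have hmγ := Tc.min_pos hγ
  have hMγ := Tc.max_pos hγ
  set ε := ⨆ t : Set.Ici (0:ℝ), |h₁ t - h₂ t| with hεdef
  have hbdd : BddAbove (Set.range fun t : Set.Ici (0:ℝ) => |h₁ t.1 - h₂ t.1|) := by
    refine ⟨1, ?_⟩
    rintro y ⟨t, rfl⟩
    have hb1 := hb₁ t.1 t.2
    have hb2 := hb₂ t.1 t.2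
    rw [abs_le]
    constructor <;> [linarith [hb1.1, hb2.2]; linarith [hb1.2, hb2.1]]
  have hε : ∀ z ≥ (0:ℝ), |h₁ z - h₂ z| ≤ ε := fun z hz => le_ciSup hbdd ⟨z, hz⟩
  have hε0 : 0 ≤ ε := le_trans (abs_nonneg _) (hε 0 le_rfl)
  set ℓ := Real.sqrt (π/(max 1 (1+γ)/min 1 (1+δ)))/2 * (1/(max 1 (1+δ))) with hℓdef
  have hβ : 0 < π/(max 1 (1+γ)/min 1 (1+δ)) := by positivity
  have hℓpos : 0 < ℓ := by
    rw [hℓdef]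
    have := Real.sqrt_pos.2 hβ
    positivity
  have hℓ1 : ℓ ≤ L₁ := Tc.limit_lb hδ hγ h₁ hcont₁ hb₁ hL₁
  have hℓ2 : ℓ ≤ L₂ := Tc.limit_lb hδ hγ h₂ hcont₂ hb₂ hL₂
  have hL₁pos : 0 < L₁ := lt_of_lt_of_le hℓpos hℓ1
  have hL₂pos : 0 < L₂ := lt_of_lt_of_le hℓpos hℓ2
  have hLd : |L₁ - L₂| ≤ ε * Kconst δ γ :=
    Tc.limit_diff hδ hγ h₁ h₂ hcont₁ hcont₂ hb₁ hb₂ hε hL₁ hL₂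
  have hα : 0 < min 1 (1+γ)/max 1 (1+δ) := div_pos hmγ hMδ
  have hK : 0 ≤ Kconst δ γ := by
    rw [Kconst]
    apply add_nonneg
    · exact mul_nonneg (div_nonneg (abs_nonneg _) (pow_nonneg hmδ.le 2))
        (by positivity)
    · exact mul_nonneg (div_nonneg (abs_nonneg _) (pow_nonneg hmδ.le 3))
        (by positivity)
  have hD0 : 0 ≤ ε * Kconst δ γ := mul_nonneg hε0 hK
  have key : ∀ t : Set.Ici (0:ℝ), |Fint δ γ h₁ t.1 / L₁ - Fint δ γ h₂ t.1 / L₂| ≤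
      2 * (ε * Kconst δ γ) / ℓ := by
    rintro ⟨x, hx⟩
    simp only
    have hx' : (0:ℝ) ≤ x := hx
    have hF1 := Tc.F_diff hδ hγ h₁ h₂ hcont₁ hcont₂ hb₁ hb₂ hε hx'
    have hF2nonneg := Tc.F_nonneg (γ := γ) hδ h₂ hb₂ hx'
    have hF2le := Tc.F_le_limit hδ h₂ hcont₂ hb₂ hL₂ hx'
    have e1 : Fint δ γ h₁ x / L₁ - Fint δ γ h₂ x / L₂
        = (Fint δ γ h₁ x - Fint δ γ h₂ x)/L₁
          + (Fint δ γ h₂ x / L₂) * ((L₂ - L₁)/L₁) := by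
      field_simp
      ring
    rw [e1]
    have t1 : |(Fint δ γ h₁ x - Fint δ γ h₂ x)/L₁| ≤ ε * Kconst δ γ / ℓ := by
      rw [abs_div, abs_of_pos hL₁pos]
      exact div_le_div₀ hD0 hF1 hℓpos hℓ1
    have t2 : |(Fint δ γ h₂ x / L₂) * ((L₂ - L₁)/L₁)| ≤ ε * Kconst δ γ / ℓ := by
      rw [abs_mul]
      have ha : |Fint δ γ h₂ x / L₂| ≤ 1 := by
        rw [abs_div, abs_of_pos hL₂pos, abs_of_nonneg hF2nonneg]
        exact div_le_one_of_le₀ hF2le hL₂pos.le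
      have hb' : |(L₂-L₁)/L₁| ≤ ε * Kconst δ γ / ℓ := by
        rw [abs_div, abs_of_pos hL₁pos, abs_sub_comm]
        exact div_le_div₀ hD0 hLd hℓpos hℓ1
      calc |Fint δ γ h₂ x / L₂| * |(L₂-L₁)/L₁| ≤ 1 * (ε * Kconst δ γ / ℓ) :=
            mul_le_mul ha hb' (abs_nonneg _) one_pos.le
        _ = ε * Kconst δ γ / ℓ := one_mul _
    calc |(Fint δ γ h₁ x - Fint δ γ h₂ x)/L₁
          + (Fint δ γ h₂ x / L₂) * ((L₂ - L₁)/L₁)|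
        ≤ |(Fint δ γ h₁ x - Fint δ γ h₂ x)/L₁|
          + |(Fint δ γ h₂ x / L₂) * ((L₂ - L₁)/L₁)| := abs_add_le _ _
      _ ≤ ε * Kconst δ γ / ℓ + ε * Kconst δ γ / ℓ := add_le_add t1 t2
      _ = 2 * (ε * Kconst δ γ) / ℓ := by ring
  apply ciSup_le
  intro t
  refine (key t).trans (le_of_eq ?_)
  have halg : 2 * Kconst δ γ = Mconst δ γ * ℓ := by
    rw [Kconst, Mconst, hℓdef]
    exact Tc.algebra hmδ hMδ hmγ hMγ
  rw [div_eq_iff hℓpos.ne']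
  linear_combination ε * halg
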